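/- Let X be a ptolemaic metric space and let c₁, c₂ : ℝ → X be parallel geodesic lines. Then there exists s₀ ∈ ℝ such that the reparametrized line c₂'(t) = c₂(t + s₀) satisfies b_{c₂'}⁺ = b_{c₁}⁺ and b_{c₂'}⁻ = b_{c₁}⁻, where b^± denote the Busemann functions of the forward and backward rays of the respective lines. -/

import Mathlib

open Metric Set Filter Topology

/-- A metric space is ptolemaic if all quadruples satisfy the Ptolemy inequality. -/
def Ptolemaic (X : Type*) [MetricSpace X] : Prop :=
  ∀ x y z w : X, dist x y * dist z w ≤ dist x z * dist y w + dist x w * dist y z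

/-- A unit-speed geodesic line: an isometric embedding of ℝ. -/
def IsGeodesicLine {X : Type*} [MetricSpace X] (c : ℝ → X) : Prop :=
  ∀ s t : ℝ, dist (c s) (c t) = |s - t|

/-- Two lines are parallel if their distance is sublinear in both directions. -/
def ParallelLines {X : Type*} [MetricSpace X] (c₀ c₁ : ℝ → X) : Prop :=
  Filter.Tendsto (fun t => dist (c₀ t) (c₁ t) / |t|) Filter.atTop (nhds 0) ∧
  Filter.Tendsto (fun t => dist (c₀ t) (c₁ t) / |t|) Filter.atBot (nhds 0)

/-- `b` is the Busemann function of the ray `c`. -/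
def IsBusemannOf {X : Type*} [MetricSpace X] (c : ℝ → X) (b : X → ℝ) : Prop :=
  ∀ x : X, Filter.Tendsto (fun t => dist x (c t) - t) Filter.atTop (nhds (b x))

section Helpers

variable {X : Type*} [MetricSpace X]

lemma geodesic_dist_of_le {c : ℝ → X} (hc : IsGeodesicLine c) {s t : ℝ} (h : s ≤ t) :
    dist (c s) (c t) = t - s := by
  rw [hc, abs_of_nonpos (by linarith)]; ring

lemma busemann_antitone {c : ℝ → X} (hc : IsGeodesicLine c) (x : X) :
    Antitone fun t => dist x (c t) - t := by
  intro s t hst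
  have h1 := dist_triangle x (c s) (c t)
  have h2 := geodesic_dist_of_le hc hst
  simp only
  linarith

lemma busemann_le {c : ℝ → X} {b : X → ℝ} (hc : IsGeodesicLine c)
    (hb : IsBusemannOf c b) (x : X) (t : ℝ) : b x ≤ dist x (c t) - t := by
  refine le_of_tendsto (hb x) ?_
  filter_upwards [eventually_ge_atTop t] with s hs
  exact busemann_antitone hc x hs

lemma busemann_lipschitz {c : ℝ → X} {b : X → ℝ} (hb : IsBusemannOf c b) (x y : X) :
    b x ≤ b y + dist x y := by
  refine le_of_tendsto_of_tendsto' (hb x) ((hb y).add_const (dist x y)) (fun t => ?_)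
  have := dist_triangle x y (c t)
  linarith

lemma exists_busemann (c : ℝ → X) (hc : IsGeodesicLine c) : ∃ b, IsBusemannOf c b := by
  refine ⟨fun x => ⨅ t, (dist x (c t) - t), fun x => ?_⟩
  apply tendsto_atTop_ciInf (busemann_antitone hc x)
  refine ⟨-dist x (c 0), ?_⟩
  rintro _ ⟨t, rfl⟩
  have h1 : dist (c 0) (c t) ≤ dist (c 0) x + dist x (c t) := dist_triangle _ _ _
  have h2 : dist (c 0) (c t) = |t| := by rw [hc]; simp
  have h3 : t ≤ |t| := le_abs_self t
  rw [dist_comm (c 0) x] at h1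
  simp only
  linarith

lemma busemann_sum_nonneg {c : ℝ → X} {bp bm : X → ℝ} (hc : IsGeodesicLine c)
    (hbp : IsBusemannOf c bp) (hbm : IsBusemannOf (fun t => c (-t)) bm) (x : X) :
    0 ≤ bp x + bm x := by
  have h := (hbp x).add (hbm x)
  refine ge_of_tendsto h ?_
  filter_upwards [eventually_ge_atTop (0 : ℝ)] with t ht
  have h2 : dist (c t) (c (-t)) = 2 * t := by
    rw [hc, abs_of_nonneg (by linarith)]; ring
  have h3 := dist_triangle (c t) x (c (-t))
  rw [dist_comm (c t) x] at h3
  show (0:ℝ) ≤ (dist x (c t) - t) + (dist x (c (-t)) - t)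
  linarith

/-- Core real-analysis lemma: a "convex" function `g` with `g w ≤ e w - w` for a
sublinear nonnegative `e` has `g v + v` antitone. -/
lemma convex_sublinear_decr {g e : ℝ → ℝ}
    (hconv : ∀ u v w : ℝ, u ≤ v → v ≤ w → g v * (w - u) ≤ g u * (w - v) + g w * (v - u))
    (he0 : ∀ w, 0 ≤ e w)
    (hub : ∀ w, g w ≤ e w - w)
    (he : Tendsto (fun w => e w / |w|) atTop (𝓝 0))
    {u v : ℝ} (huv : u ≤ v) : g v + v ≤ g u + u := by
  rcases eq_or_lt_of_le huv with rfl | huv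
  · exact le_rfl
  have hvu : (0:ℝ) < v - u := by linarith
  have htop : Tendsto (fun w : ℝ => w - u) atTop atTop := by
    simpa [sub_eq_add_neg] using tendsto_atTop_add_const_right atTop (-u) tendsto_id
  have TD : ∀ k : ℝ, Tendsto (fun w : ℝ => k / (w - u)) atTop (𝓝 0) :=
    fun k => Tendsto.div_atTop tendsto_const_nhds htop
  have T1 : Tendsto (fun w : ℝ => (w - v) / (w - u)) atTop (𝓝 1) := by
    have heq : (fun w : ℝ => 1 - (v - u) / (w - u)) =ᶠ[atTop] fun w => (w - v) / (w - u) := by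
      filter_upwards [eventually_gt_atTop u] with w hw
      have hne : w - u ≠ 0 := ne_of_gt (by linarith)
      rw [one_sub_div hne, show w - u - (v - u) = w - v by ring]
    have := (tendsto_const_nhds (x := (1:ℝ))).sub (TD (v - u))
    simpa using this.congr' heq
  have T3b : Tendsto (fun w : ℝ => w / (w - u)) atTop (𝓝 1) := by
    have heq : (fun w : ℝ => 1 + u / (w - u)) =ᶠ[atTop] fun w => w / (w - u) := by
      filter_upwards [eventually_gt_atTop u] with w hw
      have hne : w - u ≠ 0 := ne_of_gt (by linarith)
      field_simp
      ring
    have := (tendsto_const_nhds (x := (1:ℝ))).add (TD u)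
    simpa using this.congr' heq
  have T3a : Tendsto (fun w : ℝ => e w / (w - u)) atTop (𝓝 0) := by
    refine squeeze_zero' ?_ ?_ (by simpa using he.const_mul (2:ℝ))
    · filter_upwards [eventually_gt_atTop u] with w hw
      have hwu : (0:ℝ) < w - u := by linarith
      exact div_nonneg (he0 w) hwu.le
    · filter_upwards [eventually_ge_atTop (2 * |u| + 2)] with w hw
      have hu := abs_nonneg u
      have hw0 : (0:ℝ) < w := by linarith
      have hwu : (0:ℝ) < w - u := by
        have := le_abs_self u
        linarith
      rw [abs_of_pos hw0, mul_div_assoc']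
      rw [div_le_div_iff₀ hwu hw0]
      have h1 : u ≤ |u| := le_abs_self u
      nlinarith [he0 w]
  have hev : ∀ᶠ w in atTop,
      g v ≤ g u * ((w - v) / (w - u)) + (e w / (w - u)) * (v - u) - (w / (w - u)) * (v - u) := by
    filter_upwards [eventually_gt_atTop v] with w hw
    have hwu : (0:ℝ) < w - u := by linarith
    have h1 := hconv u v w huv.le hw.le
    have h2 : g w * (v - u) ≤ (e w - w) * (v - u) :=
      mul_le_mul_of_nonneg_right (hub w) hvu.le
    have h3 : g v * (w - u) ≤ g u * (w - v) + (e w - w) * (v - u) := by linarith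
    have h4 : g v ≤ (g u * (w - v) + (e w - w) * (v - u)) / (w - u) := by
      rw [le_div_iff₀ hwu]; linarith
    have h5 : (g u * (w - v) + (e w - w) * (v - u)) / (w - u)
        = g u * ((w - v) / (w - u)) + (e w / (w - u)) * (v - u) - (w / (w - u)) * (v - u) := by
      field_simp
      ring
    linarith [h4, h5.symm.le]
  have TR : Tendsto (fun w : ℝ =>
      g u * ((w - v) / (w - u)) + (e w / (w - u)) * (v - u) - (w / (w - u)) * (v - u))
      atTop (𝓝 (g u * 1 + 0 * (v - u) - 1 * (v - u))) :=
    ((tendsto_const_nhds.mul T1).add (T3a.mul_const _)).sub (T3b.mul_const _)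
  have := ge_of_tendsto TR hev
  linarith

/-- Busemann functions of `c` are affine of slope `-1` along a parallel line `d`. -/
lemma busemann_affine {c d : ℝ → X} {b : X → ℝ} (hPT : Ptolemaic X)
    (hc : IsGeodesicLine c) (hd : IsGeodesicLine d) (hb : IsBusemannOf c b)
    (hp : Tendsto (fun t => dist (c t) (d t) / |t|) atTop (𝓝 0))
    (hm : Tendsto (fun t => dist (c t) (d t) / |t|) atBot (𝓝 0)) :
    ∀ u : ℝ, b (d u) = b (d 0) - u := by
  have hconv : ∀ u v w : ℝ, u ≤ v → v ≤ w →
      b (d v) * (w - u) ≤ b (d u) * (w - v) + b (d w) * (v - u) := by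
    intro u v w huv hvw
    have hF : Tendsto (fun t => (dist (d v) (c t) - t) * (w - u)) atTop
        (𝓝 (b (d v) * (w - u))) := (hb (d v)).mul_const _
    have hG : Tendsto (fun t =>
        (dist (d u) (c t) - t) * (w - v) + (dist (d w) (c t) - t) * (v - u)) atTop
        (𝓝 (b (d u) * (w - v) + b (d w) * (v - u))) :=
      ((hb (d u)).mul_const _).add ((hb (d w)).mul_const _)
    refine le_of_tendsto_of_tendsto' hF hG (fun t => ?_)
    have hpt := hPT (d v) (c t) (d u) (d w)
    have e1 : dist (d u) (d w) = w - u := geodesic_dist_of_le hd (by linarith)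
    have e2 : dist (d v) (d u) = v - u := by
      rw [dist_comm]; exact geodesic_dist_of_le hd huv
    have e3 : dist (d v) (d w) = w - v := geodesic_dist_of_le hd hvw
    rw [e1, e2, e3, dist_comm (c t) (d w), dist_comm (c t) (d u)] at hpt
    nlinarith [hpt]
  have hub : ∀ w : ℝ, b (d w) ≤ dist (c w) (d w) - w := by
    intro w
    have h1 := busemann_le hc hb (d w) |w|
    have h2 := dist_triangle (d w) (c w) (c |w|)
    have h3 : dist (c w) (c |w|) = |w| - w := geodesic_dist_of_le hc (le_abs_self w)
    rw [dist_comm (d w) (c w)] at h2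
    linarith
  have hlb : ∀ w : ℝ, -w - dist (c w) (d w) ≤ b (d w) := by
    intro w
    refine ge_of_tendsto (hb (d w)) ?_
    filter_upwards [eventually_ge_atTop w] with t ht
    have h2 := dist_triangle (c w) (d w) (c t)
    have h3 : dist (c w) (c t) = t - w := geodesic_dist_of_le hc ht
    linarith
  have D1 : ∀ u v : ℝ, u ≤ v → b (d v) + v ≤ b (d u) + u := by
    intro u v huv
    exact convex_sublinear_decr hconv (fun w => dist_nonneg) hub hp huv
  have D2 : ∀ u v : ℝ, u ≤ v → b (d u) + u ≤ b (d v) + v := by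
    intro u v huv
    have he' : Tendsto (fun w : ℝ => dist (c (-w)) (d (-w)) / |w|) atTop (𝓝 0) := by
      have := hm.comp tendsto_neg_atTop_atBot
      simpa [Function.comp_def, abs_neg] using this
    have hconv' : ∀ u v w : ℝ, u ≤ v → v ≤ w →
        (b (d (-v)) - 2*v) * (w - u) ≤ (b (d (-u)) - 2*u) * (w - v)
          + (b (d (-w)) - 2*w) * (v - u) := by
      intro p q r hpq hqr
      have := hconv (-r) (-q) (-p) (by linarith) (by linarith)
      nlinarith [this]
    have hub' : ∀ w : ℝ, b (d (-w)) - 2*w ≤ dist (c (-w)) (d (-w)) - w := by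
      intro w
      have := hub (-w)
      linarith
    have key := convex_sublinear_decr hconv' (fun w => dist_nonneg) hub' he'
      (neg_le_neg huv)
    -- key : (b (d (- -u)) - 2 * -u) + -u ≤ (b (d (- -v)) - 2 * -v) + -v
    simp only [neg_neg] at key
    linarith
  intro u
  rcases le_total u 0 with hu | hu
  · have h1 := D1 u 0 hu
    have h2 := D2 u 0 hu
    linarith
  · have h1 := D1 0 u hu
    have h2 := D2 0 u hu
    linarith

lemma busemann_pair_sum_nonpos {c d : ℝ → X} {bc bd : X → ℝ} (hPT : Ptolemaic X)
    (hc : IsGeodesicLine c) (hd : IsGeodesicLine d)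
    (hbc : IsBusemannOf c bc) (hbd : IsBusemannOf d bd)
    (hp : Tendsto (fun t => dist (c t) (d t) / |t|) atTop (𝓝 0)) :
    bc (d 0) + bd (c 0) ≤ 0 := by
  set a := bc (d 0) with ha
  set a' := bd (c 0) with ha'
  have hd2 : Tendsto (fun t => dist (c t) (d t) / t) atTop (𝓝 0) := by
    refine hp.congr' ?_
    filter_upwards [eventually_gt_atTop (0:ℝ)] with t ht
    rw [abs_of_pos ht]
  have hlim : Tendsto (fun t => (dist (d 0) (c 0) * dist (c t) (d t) - a * a') / t)
      atTop (𝓝 0) := by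
    have h := (hd2.const_mul (dist (d 0) (c 0))).sub
      (Tendsto.div_atTop (tendsto_const_nhds (x := a * a')) tendsto_id)
    have h2 : Tendsto (fun t => (dist (d 0) (c 0) * dist (c t) (d t) - a * a') / t)
        atTop (𝓝 (dist (d 0) (c 0) * 0 - 0)) :=
      h.congr (fun t => by simp only [id_eq]; ring)
    simpa using h2
  refine ge_of_tendsto hlim ?_
  filter_upwards [eventually_ge_atTop (max 1 (max (-a) (-a')))] with t ht
  have ht1 : (1:ℝ) ≤ t := le_trans (le_max_left _ _) ht
  have hta : -a ≤ t := le_trans (le_trans (le_max_left _ _) (le_max_right _ _)) ht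
  have hta' : -a' ≤ t := le_trans (le_trans (le_max_right _ _) (le_max_right _ _)) ht
  have h1 : t + a ≤ dist (d 0) (c t) := by
    have := busemann_le hc hbc (d 0) t; linarith
  have h2 : t + a' ≤ dist (c 0) (d t) := by
    have := busemann_le hd hbd (c 0) t; linarith
  have hmul : (t + a) * (t + a') ≤ dist (d 0) (c t) * dist (c 0) (d t) :=
    mul_le_mul h1 h2 (by linarith) dist_nonneg
  have hpt := hPT (d 0) (c t) (d t) (c 0)
  have e1 : dist (d 0) (d t) = t := by
    rw [geodesic_dist_of_le hd (by linarith : (0:ℝ) ≤ t)]; ring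
  have e2 : dist (c t) (c 0) = t := by
    rw [dist_comm, geodesic_dist_of_le hc (by linarith : (0:ℝ) ≤ t)]; ring
  rw [e1, e2, dist_comm (d t) (c 0)] at hpt
  rw [le_div_iff₀ (by linarith : (0:ℝ) < t)]
  nlinarith [hmul, hpt]

lemma busemann_le_shift {c d : ℝ → X} {bc bd : X → ℝ}
    (hbc : IsBusemannOf c bc) (hbd : IsBusemannOf d bd)
    (haff : ∀ u : ℝ, bc (d u) = bc (d 0) - u) (x : X) :
    bc x ≤ bd x + bc (d 0) := by
  refine ge_of_tendsto ((hbd x).add_const (bc (d 0))) ?_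
  refine Eventually.of_forall (fun t => ?_)
  have h := busemann_lipschitz hbc x (d t)
  rw [haff t] at h
  linarith

end Helpers

/-- **Parallel lines can be reparametrized so that they have the same forward
and backward Busemann functions.** -/
theorem parallel_lines_common_busemann_reparametrization
    (X : Type*) [MetricSpace X] (hPT : Ptolemaic X)
    (c₁ c₂ : ℝ → X) (h₁ : IsGeodesicLine c₁) (h₂ : IsGeodesicLine c₂)
    (hpar : ParallelLines c₁ c₂)
    (b₁p b₁m : X → ℝ)
    (hb₁p : IsBusemannOf (fun t => c₁ t) b₁p)
    (hb₁m : IsBusemannOf (fun t => c₁ (-t)) b₁m) :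
    ∃ s₀ : ℝ,
      IsBusemannOf (fun t => c₂ (t + s₀)) b₁p ∧
      IsBusemannOf (fun t => c₂ (-t + s₀)) b₁m := by
  -- geodesic properties of reversed lines
  have hc₁n : IsGeodesicLine (fun t => c₁ (-t)) := by
    intro s t; rw [h₁]; rw [show -s - -t = -(s - t) by ring, abs_neg]
  have hc₂n : IsGeodesicLine (fun t => c₂ (-t)) := by
    intro s t; rw [h₂]; rw [show -s - -t = -(s - t) by ring, abs_neg]
  -- parallelism variants
  have hp12T := hpar.1
  have hp12B := hpar.2
  have hp21T : Tendsto (fun t => dist (c₂ t) (c₁ t) / |t|) atTop (𝓝 0) := by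
    simpa [dist_comm] using hp12T
  have hp21B : Tendsto (fun t => dist (c₂ t) (c₁ t) / |t|) atBot (𝓝 0) := by
    simpa [dist_comm] using hp12B
  have hpn12T : Tendsto (fun t => dist (c₁ (-t)) (c₂ (-t)) / |t|) atTop (𝓝 0) := by
    have := hp12B.comp tendsto_neg_atTop_atBot
    simpa [Function.comp_def, abs_neg] using this
  have hpn12B : Tendsto (fun t => dist (c₁ (-t)) (c₂ (-t)) / |t|) atBot (𝓝 0) := by
    have := hp12T.comp tendsto_neg_atBot_atTop
    simpa [Function.comp_def, abs_neg] using this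
  have hpn21T : Tendsto (fun t => dist (c₂ (-t)) (c₁ (-t)) / |t|) atTop (𝓝 0) := by
    simpa [dist_comm] using hpn12T
  have hpn21B : Tendsto (fun t => dist (c₂ (-t)) (c₁ (-t)) / |t|) atBot (𝓝 0) := by
    simpa [dist_comm] using hpn12B
  -- Busemann functions for c₂
  obtain ⟨b₂p, hb₂p⟩ := exists_busemann c₂ h₂
  obtain ⟨b₂m, hb₂m⟩ := exists_busemann (fun t => c₂ (-t)) hc₂n
  -- affine behaviour along the parallel line
  have A1 : ∀ u : ℝ, b₁p (c₂ u) = b₁p (c₂ 0) - u :=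
    busemann_affine hPT h₁ h₂ hb₁p hp12T hp12B
  have A2 : ∀ u : ℝ, b₂p (c₁ u) = b₂p (c₁ 0) - u :=
    busemann_affine hPT h₂ h₁ hb₂p hp21T hp21B
  have A3 : ∀ u : ℝ, b₁m (c₂ (-u)) = b₁m (c₂ (-0)) - u :=
    busemann_affine hPT hc₁n hc₂n hb₁m hpn12T hpn12B
  have A4 : ∀ u : ℝ, b₂m (c₁ (-u)) = b₂m (c₁ (-0)) - u :=
    busemann_affine hPT hc₂n hc₁n hb₂m hpn21T hpn21B
  -- constants
  have S1 : 0 ≤ b₁p (c₂ 0) + b₁m (c₂ 0) := busemann_sum_nonneg h₁ hb₁p hb₁m (c₂ 0)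
  have S2 : 0 ≤ b₂p (c₁ 0) + b₂m (c₁ 0) := busemann_sum_nonneg h₂ hb₂p hb₂m (c₁ 0)
  have S3 : b₁p (c₂ 0) + b₂p (c₁ 0) ≤ 0 :=
    busemann_pair_sum_nonpos hPT h₁ h₂ hb₁p hb₂p hp12T
  have S4 : b₁m (c₂ 0) + b₂m (c₁ 0) ≤ 0 := by
    have := busemann_pair_sum_nonpos hPT hc₁n hc₂n hb₁m hb₂m hpn12T
    simpa [neg_zero] using this
  set a := b₁p (c₂ 0) with ha
  have Ea' : b₂p (c₁ 0) = -a := by linarith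
  have Eam : b₁m (c₂ 0) = -a := by linarith
  have Eam' : b₂m (c₁ 0) = a := by linarith
  -- pointwise comparisons
  have E1 : ∀ x : X, b₁p x ≤ b₂p x + a := fun x => busemann_le_shift hb₁p hb₂p A1 x
  have E2 : ∀ x : X, b₂p x ≤ b₁p x + b₂p (c₁ 0) := fun x =>
    busemann_le_shift hb₂p hb₁p A2 x
  have E3 : ∀ x : X, b₁m x ≤ b₂m x + b₁m (c₂ (-0)) := fun x =>
    busemann_le_shift hb₁m hb₂m A3 x
  have E4 : ∀ x : X, b₂m x ≤ b₁m x + b₂m (c₁ (-0)) := fun x =>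
    busemann_le_shift hb₂m hb₁m A4 x
  simp only [neg_zero] at E3 E4
  have Eqp : ∀ x : X, b₂p x = b₁p x - a := by
    intro x; have := E1 x; have := E2 x; rw [Ea'] at *; linarith
  have Eqm : ∀ x : X, b₂m x = b₁m x + a := by
    intro x; have h3 := E3 x; have h4 := E4 x; rw [Eam] at h3; rw [Eam'] at h4; linarith
  -- conclusion
  refine ⟨a, fun x => ?_, fun x => ?_⟩
  · have h : Tendsto (fun t : ℝ => dist x (c₂ (t + a)) - (t + a)) atTop (𝓝 (b₂p x)) := by
      have := (hb₂p x).comp (tendsto_atTop_add_const_right atTop a tendsto_id)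
      simpa [Function.comp_def] using this
    have h2 : Tendsto (fun t : ℝ => dist x (c₂ (t + a)) - t) atTop (𝓝 (b₂p x + a)) :=
      (h.add_const a).congr (fun t => by ring)
    have he : b₂p x + a = b₁p x := by rw [Eqp x]; ring
    rw [he] at h2
    exact h2
  · have hcomp := (hb₂m x).comp (tendsto_atTop_add_const_right atTop (-a) tendsto_id)
    have h2 : Tendsto (fun t : ℝ => dist x (c₂ (-t + a)) - t) atTop (𝓝 (b₂m x + -a)) := by
      have h1 := hcomp.add_const (-a)
      refine h1.congr (fun t => ?_)
      show dist x (c₂ (-(t + -a))) - (t + -a) + -a = dist x (c₂ (-t + a)) - t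
      rw [show -(t + -a) = -t + a by ring]
      ring
    have he : b₂m x + -a = b₁m x := by rw [Eqm x]; ring
    rw [he] at h2
    exact h2
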